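/- If A ⊆ X has odd cardinality, then δ_A = ∑_{B ⊊ A, |B| even} (𝕋_{|A|−|B|} / 2^{|A|−|B|}) · δ_B, where the sum is over all proper subsets B of A of even cardinality. -/

import Mathlib

open Finset

/-- The tangent numbers `𝕋ₖ`, defined by the EGF `tanh x = ∑ₖ 𝕋ₖ xᵏ/k!`;
equivalently `𝕋ₖ = 2^(k+1)(2^(k+1)−1)𝔹_{k+1}/(k+1)` for `k ≥ 1`
(and `𝕋₀ = 0`, so `𝕋₁ = 1`, `𝕋₃ = −2`, `𝕋ₖ = 0` for even `k`). -/
noncomputable def tangentNumber (k : ℕ) : ℚ :=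
  if k = 0 then 0
  else 2 ^ (k + 1) * (2 ^ (k + 1) - 1) * bernoulli (k + 1) / (k + 1)

namespace DivAux

noncomputable def c (k : ℕ) : ℚ :=
  if k = 0 then 0 else 2 * (2 ^ (k + 1) - 1) * bernoulli (k + 1) / (k + 1)

lemma c_even {k : ℕ} (h : Even k) : c k = 0 := by
  rcases Nat.eq_zero_or_pos k with h0 | h0
  · simp [c, h0]
  · have hk : k ≠ 0 := h0.ne'
    have hodd : Odd (k + 1) := Even.add_one h
    have h1 : 1 < k + 1 := by omega
    have : bernoulli (k + 1) = 0 := by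
      rw [bernoulli_eq_bernoulli'_of_ne_one (by omega)]
      exact bernoulli'_eq_zero_of_odd hodd h1
    simp [c, hk, this]

lemma eval_two (m : ℕ) : (Polynomial.bernoulli m).eval (2 : ℚ) = bernoulli' m + m := by
  have h := Polynomial.bernoulli_eval_one_add m 1
  norm_num [Polynomial.bernoulli_eval_one] at h
  exact h

lemma eval_expand (m : ℕ) (x : ℚ) : (Polynomial.bernoulli m).eval x =
    ∑ i ∈ range (m + 1), bernoulli i * (m.choose i : ℚ) * x ^ (m - i) := by
  rw [Polynomial.bernoulli, Polynomial.eval_finset_sum]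
  exact Finset.sum_congr rfl fun i _ => by rw [Polynomial.eval_monomial]

lemma sum_choose_inv2 (m : ℕ) :
    ∑ i ∈ range (m + 1), (m.choose i : ℚ) * (2⁻¹) ^ i * bernoulli i
      = (2⁻¹) ^ m * (bernoulli' m + m) := by
  have h := eval_two m
  rw [eval_expand] at h
  have h2 : ∀ i ∈ range (m + 1),
      bernoulli i * (m.choose i : ℚ) * (2:ℚ) ^ (m - i)
        = ((m.choose i : ℚ) * (2⁻¹) ^ i * bernoulli i) * 2 ^ m := by
    intro i hi
    have hi' : i ≤ m := by simpa using Nat.lt_succ_iff.mp (mem_range.mp hi)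
    have : (2:ℚ) ^ (m - i) * 2 ^ i = 2 ^ m := by
      rw [← pow_add]; congr 1; omega
    have h2i : (2:ℚ)⁻¹ ^ i * 2 ^ i = 1 := by rw [← mul_pow]; norm_num
    linear_combination ((m.choose i : ℚ) * bernoulli i * (2⁻¹) ^ i) * this
      - ((m.choose i : ℚ) * bernoulli i * 2 ^ (m - i)) * h2i
  rw [Finset.sum_congr rfl h2, ← Finset.sum_mul] at h
  have h3 : ((2:ℚ) ^ m) ≠ 0 := by positivity
  have h2m : (2:ℚ)⁻¹ ^ m * 2 ^ m = 1 := by rw [← mul_pow]; norm_num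
  linear_combination (2⁻¹:ℚ) ^ m * h
    - (∑ i ∈ range (m + 1), (m.choose i : ℚ) * (2⁻¹) ^ i * bernoulli i) * h2m
lemma eval_half (n : ℕ) : (Polynomial.bernoulli n).eval (2⁻¹ : ℚ)
    = (2 * (2⁻¹ : ℚ) ^ n - 1) * bernoulli n := by
  induction n using Nat.strong_induction_on with
  | _ n IH =>
  rcases Nat.eq_zero_or_pos n with h0 | h0
  · subst h0; norm_num
  · -- n ≥ 1
    have hsum := Polynomial.sum_bernoulli n
    have hev := congrArg (Polynomial.eval (2⁻¹ : ℚ)) hsum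
    rw [Polynomial.eval_finset_sum, Polynomial.eval_monomial] at hev
    simp only [Polynomial.eval_smul, smul_eq_mul] at hev
    -- split off top term
    rw [Finset.sum_range_succ] at hev
    have hIH : ∀ k ∈ range n, ((n+1).choose k : ℚ) * (Polynomial.bernoulli k).eval (2⁻¹ : ℚ)
        = ((n+1).choose k : ℚ) * ((2 * (2⁻¹:ℚ) ^ k - 1) * bernoulli k) := by
      intro k hk; rw [IH k (mem_range.mp hk)]
    rw [Finset.sum_congr rfl hIH] at hev
    -- two auxiliary sums
    have hA : ∑ k ∈ range n, ((n+1).choose k : ℚ) * bernoulli k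
        = - ((n:ℚ) + 1) * bernoulli n := by
      have := sum_bernoulli (n + 1)
      rw [Finset.sum_range_succ] at this
      rw [if_neg (by omega)] at this
      have hc : ((n+1).choose n : ℚ) = (n : ℚ) + 1 := by
        rw [Nat.choose_succ_self_right]; push_cast; ring
      rw [hc] at this
      linarith [this]
    have hB : ∑ k ∈ range n, ((n+1).choose k : ℚ) * (2⁻¹) ^ k * bernoulli k
        = (2⁻¹:ℚ) ^ (n+1) * (bernoulli' (n+1) + (n+1))
          - ((n:ℚ)+1) * (2⁻¹)^n * bernoulli n - (2⁻¹:ℚ)^(n+1) * bernoulli (n+1) := by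
      have h1 := sum_choose_inv2 (n + 1)
      rw [Finset.sum_range_succ, Finset.sum_range_succ] at h1
      have hc : ((n+1).choose n : ℚ) = (n : ℚ) + 1 := by
        rw [Nat.choose_succ_self_right]; push_cast; ring
      rw [hc] at h1
      simp only [Nat.choose_self, Nat.cast_one, one_mul] at h1
      push_cast at h1 ⊢
      linarith [h1]
    have hb' : bernoulli' (n+1) = bernoulli (n+1) := by
      rw [bernoulli_eq_bernoulli'_of_ne_one (by omega)]
    rw [hb'] at hB
    -- combine
    have hsplit : ∀ k ∈ range n, ((n+1).choose k : ℚ) * ((2 * (2⁻¹:ℚ) ^ k - 1) * bernoulli k)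
        = 2 * (((n+1).choose k : ℚ) * (2⁻¹) ^ k * bernoulli k)
          - ((n+1).choose k : ℚ) * bernoulli k := by
      intro k _; ring
    rw [Finset.sum_congr rfl hsplit, Finset.sum_sub_distrib, ← Finset.mul_sum, hA, hB] at hev
    have hc : ((n+1).choose n : ℚ) = (n : ℚ) + 1 := by
      rw [Nat.choose_succ_self_right]; push_cast; ring
    rw [hc] at hev
    have hn1 : ((n:ℚ) + 1) ≠ 0 := by positivity
    apply mul_left_cancel₀ hn1
    have hq : (2⁻¹:ℚ) ^ (n+1) * 2 = (2⁻¹:ℚ) ^ n := by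
      rw [pow_succ]; ring
    nlinarith [hev, hq]
lemma S_closed (m : ℕ) : ∑ j ∈ range (m + 1), (m.choose j : ℚ) * 2 ^ j * bernoulli j
    = (2 - 2 ^ m) * bernoulli m := by
  have h := eval_half m
  rw [eval_expand] at h
  have h2 : ∀ i ∈ range (m + 1),
      bernoulli i * (m.choose i : ℚ) * (2⁻¹:ℚ) ^ (m - i)
        = ((m.choose i : ℚ) * 2 ^ i * bernoulli i) * (2⁻¹) ^ m := by
    intro i hi
    have hi' : i ≤ m := Nat.lt_succ_iff.mp (mem_range.mp hi)
    have key : (2⁻¹:ℚ) ^ (m - i) = 2 ^ i * (2⁻¹) ^ m := by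
      rw [inv_pow, inv_pow]
      rw [eq_comm, mul_inv_eq_iff_eq_mul₀ (by positivity), inv_mul_eq_div,
        eq_div_iff (by positivity), ← pow_add]
      congr 1; omega
    rw [key]; ring
  rw [Finset.sum_congr rfl h2, ← Finset.sum_mul] at h
  have hm : ((2⁻¹:ℚ)) ^ m ≠ 0 := by positivity
  have h3 : (2 * (2⁻¹:ℚ) ^ m - 1) * bernoulli m = ((2 - 2^m) * bernoulli m) * (2⁻¹)^m := by
    have h5 : (2:ℚ)^m * (2⁻¹:ℚ)^m = 1 := by rw [inv_pow 2 m]; field_simp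
    linear_combination (bernoulli m) * h5
  rw [h3] at h
  exact mul_right_cancel₀ hm h
noncomputable def F (a t : ℕ) : ℚ := ∑ b ∈ range (a + 1), (t.choose b : ℚ) * c (a - b)

lemma c_apply {k : ℕ} (hk : k ≠ 0) :
    c k = 2 * (2 ^ (k + 1) - 1) * bernoulli (k + 1) / ((k : ℚ) + 1) := by
  simp only [c, if_neg hk]

lemma F_zero (a : ℕ) : F a 0 = c a := by
  unfold F
  rw [Finset.sum_eq_single 0]
  · simp
  · intro b _ hb
    rw [Nat.choose_eq_zero_of_lt (by omega)]
    simp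
  · intro h; simp at h

lemma F_succ (a t : ℕ) (ha : 1 ≤ a) : F a (t + 1) = F a t + F (a - 1) t := by
  have hr : (a - 1) + 1 = a := by omega
  have hFa : F (a - 1) t = ∑ i ∈ range a, (t.choose i : ℚ) * c (a - 1 - i) := by
    unfold F; rw [hr]
  rw [hFa]
  unfold F
  rw [Finset.sum_range_succ' (fun b => ((t+1).choose b : ℚ) * c (a - b)),
    Finset.sum_range_succ' (fun b => (t.choose b : ℚ) * c (a - b))]
  have hsplit : ∀ i ∈ range a, ((t+1).choose (i+1) : ℚ) * c (a - (i+1))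
      = (t.choose (i+1) : ℚ) * c (a - (i+1)) + (t.choose i : ℚ) * c ((a-1) - i) := by
    intro i hi
    rw [Nat.choose_succ_succ']
    have h3 : a - (i + 1) = (a - 1) - i := by omega
    rw [h3]
    push_cast
    ring
  rw [Finset.sum_congr rfl hsplit, Finset.sum_add_distrib]
  simp only [Nat.choose_zero_right, Nat.cast_one, one_mul, Nat.sub_zero]
  ring

lemma F_diag (a : ℕ) (ha : 1 ≤ a) : F a a = 1 - c a := by
  have hrefl : F a a = ∑ k ∈ range (a + 1), (a.choose k : ℚ) * c k := by
    unfold F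
    rw [← Finset.sum_range_reflect]
    apply Finset.sum_congr rfl
    intro j hj
    have hj' : j ≤ a := Nat.lt_succ_iff.mp (mem_range.mp hj)
    have h1 : a + 1 - 1 - j = a - j := by omega
    rw [h1, Nat.choose_symm hj', Nat.sub_sub_self hj']
  rw [hrefl]
  have h1 := S_closed (a + 1)
  have h2 : ∑ j ∈ range (a + 2), ((a+1).choose j : ℚ) * bernoulli j = bernoulli (a + 1) := by
    rw [Finset.sum_range_succ, sum_bernoulli, if_neg (by omega)]
    simp
  have hn1 : ((a:ℚ) + 1) ≠ 0 := by positivity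
  apply mul_left_cancel₀ hn1
  have hterm : ∀ k ∈ range (a + 1), ((a:ℚ)+1) * ((a.choose k : ℚ) * c k)
      = (if k = 0 then ((a:ℚ)+1) else 0) +
        2 * (((a+1).choose (k+1) : ℚ) * (2 ^ (k+1) - 1) * bernoulli (k+1)) := by
    intro k hk
    rcases Nat.eq_zero_or_pos k with h0 | h0
    · subst h0
      simp only [if_pos rfl, c, Nat.choose_zero_right, Nat.choose_one_right]
      norm_num [bernoulli_one]
      ring
    · rw [if_neg (by omega)]
      have hch : ((a:ℚ)+1) * (a.choose k : ℚ) = (((a+1).choose (k+1) : ℚ)) * ((k:ℚ)+1) := by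
        have hq : ((a + 1) * a.choose k : ℕ) = ((a+1).choose (k+1) * (k+1) : ℕ) :=
          Nat.add_one_mul_choose_eq a k
        exact_mod_cast congrArg (fun x : ℕ => (x : ℚ)) hq
      have hk1 : ((k:ℚ) + 1) ≠ 0 := by positivity
      rw [c_apply (by omega)]
      field_simp
      linear_combination (2 * ((2:ℚ) ^ (k+1) - 1) * bernoulli (k+1)) * hch
  rw [Finset.mul_sum, Finset.sum_congr rfl hterm, Finset.sum_add_distrib]
  have hif : ∑ k ∈ range (a + 1), (if k = 0 then ((a:ℚ)+1) else 0) = ((a:ℚ)+1) := by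
    rw [Finset.sum_ite_eq' (range (a+1)) 0 (fun _ => ((a:ℚ)+1))]
    rw [if_pos (mem_range.mpr (by omega))]
  rw [hif]
  have hshift : ∑ k ∈ range (a + 1), 2 * (((a+1).choose (k+1) : ℚ) * (2 ^ (k+1) - 1) * bernoulli (k+1))
      = 2 * ((1 - 2 ^ (a+1)) * bernoulli (a+1)) := by
    have hG : ∑ j ∈ range (a + 2), 2 * (((a+1).choose j : ℚ) * (2 ^ j - 1) * bernoulli j)
        = 2 * ((1 - 2 ^ (a+1)) * bernoulli (a+1)) := by
      have hsp : ∀ j ∈ range (a + 2), 2 * (((a+1).choose j : ℚ) * (2 ^ j - 1) * bernoulli j)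
          = 2 * (((a+1).choose j : ℚ) * 2 ^ j * bernoulli j) - 2 * (((a+1).choose j : ℚ) * bernoulli j) := by
        intro j _; ring
      rw [Finset.sum_congr rfl hsp, Finset.sum_sub_distrib, ← Finset.mul_sum, ← Finset.mul_sum, h1, h2]
      ring
    rw [Finset.sum_range_succ' (fun j => 2 * (((a+1).choose j : ℚ) * (2 ^ j - 1) * bernoulli j))] at hG
    simp only [pow_zero, sub_self, mul_zero, zero_mul, add_zero, mul_one] at hG
    convert hG using 2
  rw [hshift, c_apply (by omega : a ≠ 0)]
  field_simp
  ring
lemma F_one (a : ℕ) (ha : 2 ≤ a) : F a 1 = c a + c (a - 1) := by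
  have := F_succ a 0 (by omega)
  rw [this, F_zero, F_zero]

lemma F_pred (a : ℕ) (ha : 2 ≤ a) : F a (a - 1) = c (a - 1) - c a := by
  have h := F_succ a (a - 1) (by omega)
  rw [show (a - 1) + 1 = a by omega] at h
  rw [F_diag a (by omega), F_diag (a - 1) (by omega)] at h
  linarith [h]

lemma FG : ∀ a : ℕ,
    (Odd a → ∀ t, 0 < t → t < a → F a t + F a (a - t) = 0) ∧
    (Even a → ∀ t, 0 < t → t < a → F a t = F a (a - t)) := by
  intro a
  induction a using Nat.strong_induction_on with
  | _ a IH =>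
  constructor
  · -- odd case
    intro hodd t
    induction t with
    | zero => intro h; omega
    | succ t IHt =>
      intro _ hlt
      rcases Nat.eq_zero_or_pos t with h0 | h0
      · -- t+1 = 1
        subst h0
        have ha2 : 2 ≤ a := by omega
        have heven : Even (a - 1) := by
          rcases hodd with ⟨m, hm⟩; exact ⟨m, by omega⟩
        rw [F_one a ha2, F_pred a ha2, c_even heven]
        ring
      · -- step
        have ht : t < a := by omega
        have hta : t < a - 1 := by omega
        have h1 : F a (t + 1) = F a t + F (a - 1) t := F_succ a t (by omega)
        have h2 : F a ((a - t - 1) + 1) = F a (a - t - 1) + F (a - 1) (a - t - 1) :=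
          F_succ a (a - t - 1) (by omega)
        rw [show (a - t - 1) + 1 = a - t by omega] at h2
        have hIH := IHt h0 ht
        have hEv := (IH (a - 1) (by omega)).2
          (by rcases hodd with ⟨m, hm⟩; exact ⟨m, by omega⟩) t h0 hta
        rw [show a - 1 - t = a - t - 1 by omega] at hEv
        rw [show a - (t + 1) = a - t - 1 by omega]
        linarith [h1, h2, hIH, hEv]
  · -- even case
    intro heven t
    induction t with
    | zero => intro h; omega
    | succ t IHt =>
      intro _ hlt
      rcases Nat.eq_zero_or_pos t with h0 | h0
      · subst h0
        have ha2 : 2 ≤ a := by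
          rcases heven with ⟨m, hm⟩; omega
        rw [F_one a ha2, F_pred a ha2, c_even heven]
        ring
      · have ht : t < a := by omega
        have hta : t < a - 1 := by omega
        have h1 : F a (t + 1) = F a t + F (a - 1) t := F_succ a t (by omega)
        have h2 : F a ((a - t - 1) + 1) = F a (a - t - 1) + F (a - 1) (a - t - 1) :=
          F_succ a (a - t - 1) (by omega)
        rw [show (a - t - 1) + 1 = a - t by omega] at h2
        have hIH := IHt h0 ht
        have hOdd := (IH (a - 1) (by omega)).1
          (by rcases heven with ⟨m, hm⟩; exact ⟨m - 1, by omega⟩) t h0 hta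
        rw [show a - 1 - t = a - t - 1 by omega] at hOdd
        rw [show a - (t + 1) = a - t - 1 by omega]
        linarith [h1, h2, hIH, hOdd]

lemma key_rat (a t : ℕ) (ha : Odd a) (ht : t ≤ a) :
    F a t + F a (a - t) = if 0 < t ∧ t < a then 0 else 1 := by
  by_cases h : 0 < t ∧ t < a
  · rw [if_pos h]
    exact (FG a).1 ha t h.1 h.2
  · rw [if_neg h]
    have ha1 : 1 ≤ a := by
      rcases ha with ⟨m, hm⟩; omega
    have : t = 0 ∨ t = a := by omega
    rcases this with h0 | h0
    · subst h0
      rw [F_zero, Nat.sub_zero, F_diag a ha1]; ring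
    · rw [h0, Nat.sub_self, F_zero, F_diag a ha1]; ring
lemma bridge (a t : ℕ) (ha : Odd a) (ht : t ≤ a) :
    ∑ b ∈ range (a + 1), (if b = 0 then 0
      else c (a - b) * ((a.choose b : ℚ) - (t.choose b : ℚ) - ((a - t).choose b : ℚ)))
    = if 0 < t ∧ t < a then 1 else 0 := by
  have ha1 : 1 ≤ a := by rcases ha with ⟨m, hm⟩; omega
  set g : ℕ → ℚ := fun b =>
    c (a - b) * ((a.choose b : ℚ) - (t.choose b : ℚ) - ((a - t).choose b : ℚ)) with hg
  have hsum : ∑ b ∈ range (a + 1), g b = F a a - F a t - F a (a - t) := by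
    unfold F
    rw [← Finset.sum_sub_distrib, ← Finset.sum_sub_distrib]
    apply Finset.sum_congr rfl
    intro b _
    simp only [hg]
    ring
  have hL : ∑ b ∈ range (a + 1), (if b = 0 then 0 else g b)
      = (∑ b ∈ range (a + 1), g b) - g 0 := by
    rw [Finset.sum_range_succ' (fun b => if b = 0 then 0 else g b),
      Finset.sum_range_succ' g]
    simp
  have hg0 : g 0 = - c a := by
    simp only [hg]
    simp
  rw [hL, hsum, hg0, F_diag a ha1]
  have hk := key_rat a t ha ht
  by_cases h : 0 < t ∧ t < a
  · rw [if_pos h] at hk ⊢; linarith [hk]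
  · rw [if_neg h] at hk ⊢; linarith [hk]

variable {α : Type*} [DecidableEq α]

lemma count_lemma (A T : Finset α) (hT : T ⊆ A) (b : ℕ) (hb : 1 ≤ b) :
    ((powersetCard b A).filter (fun B => (B ∩ T).Nonempty ∧ (B \ T).Nonempty)).card
      + (T.card.choose b + (A \ T).card.choose b) = A.card.choose b := by
  have h1 := Finset.card_filter_add_card_filter_not
    (s := powersetCard b A) (p := fun B => (B ∩ T).Nonempty ∧ (B \ T).Nonempty)
  have h2 : (powersetCard b A).filter (fun B => ¬((B ∩ T).Nonempty ∧ (B \ T).Nonempty))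
      = powersetCard b T ∪ powersetCard b (A \ T) := by
    ext B
    simp only [mem_filter, mem_powersetCard, mem_union, not_and_or,
      not_nonempty_iff_eq_empty, sdiff_eq_empty_iff_subset]
    constructor
    · rintro ⟨⟨hBA, hcard⟩, h⟩
      rcases h with h | h
      · right
        exact ⟨Finset.subset_sdiff.mpr ⟨hBA, Finset.disjoint_iff_inter_eq_empty.mpr h⟩, hcard⟩
      · left; exact ⟨h, hcard⟩
    · rintro (⟨hBT, hcard⟩ | ⟨hBAT, hcard⟩)
      · exact ⟨⟨hBT.trans hT, hcard⟩, Or.inr hBT⟩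
      · refine ⟨⟨hBAT.trans (Finset.sdiff_subset), hcard⟩, Or.inl ?_⟩
        have := (Finset.subset_sdiff.mp hBAT).2
        exact Finset.disjoint_iff_inter_eq_empty.mp this
  have h3 : Disjoint (powersetCard b T) (powersetCard b (A \ T)) := by
    rw [Finset.disjoint_left]
    intro B hB1 hB2
    rw [mem_powersetCard] at hB1 hB2
    have : B ⊆ T ∩ (A \ T) := Finset.subset_inter hB1.1 hB2.1
    rw [Finset.inter_sdiff_self] at this
    have : B = ∅ := Finset.subset_empty.mp this
    subst this
    simp at hB1
    omega
  rw [h2, Finset.card_union_of_disjoint h3, Finset.card_powersetCard,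
    Finset.card_powersetCard, Finset.card_powersetCard] at h1
  exact h1
lemma c_eq_tangent (k : ℕ) : c k = tangentNumber k / 2 ^ k := by
  by_cases hk : k = 0
  · subst hk; simp [c, tangentNumber]
  · rw [c_apply hk]
    simp only [tangentNumber, if_neg hk]
    have h2 : ((2:ℚ) ^ k) ≠ 0 := by positivity
    have hk1 : ((k:ℚ) + 1) ≠ 0 := by positivity
    field_simp
    ring

lemma tangent_even_zero {k : ℕ} (h : Even k) : tangentNumber k = 0 := by
  have h1 := c_eq_tangent k
  rw [c_even h] at h1
  have h2 : ((2:ℚ) ^ k) ≠ 0 := by positivity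
  field_simp at h1
  linarith [h1]

variable [Fintype α]

lemma key_real (A C : Finset α) (hA : Odd A.card) :
    (if (A ∩ C).Nonempty ∧ (A \ C).Nonempty then (1:ℝ) else 0)
    = ∑ B ∈ univ.filter (fun B : Finset α => B ⊂ A ∧ Even B.card),
        (if (B ∩ C).Nonempty ∧ (B \ C).Nonempty then
          ((tangentNumber (A.card - B.card) : ℝ) / 2 ^ (A.card - B.card)) else 0) := by
  classical
  set a := A.card with ha_def
  set T := A ∩ C with hT_def
  have hTA : T ⊆ A := Finset.inter_subset_left
  set t := T.card with ht_def
  have htle : t ≤ a := Finset.card_le_card hTA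
  have hsd : A \ C = A \ T := by rw [hT_def, Finset.sdiff_inter_self_left]
  have hsdcard : (A \ T).card = a - t := Finset.card_sdiff_of_subset hTA
  -- φ : the summand expressed via T and c
  set φ : Finset α → ℝ := fun B =>
    if (B ∩ T).Nonempty ∧ (B \ T).Nonempty then ((c (a - B.card) : ℚ) : ℝ) else 0 with hφ
  -- Step 1: the RHS equals the sum of φ over the full powerset of A
  have hstep1 : ∑ B ∈ univ.filter (fun B : Finset α => B ⊂ A ∧ Even B.card),
      (if (B ∩ C).Nonempty ∧ (B \ C).Nonempty then
        ((tangentNumber (a - B.card) : ℝ) / 2 ^ (a - B.card)) else 0)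
      = ∑ B ∈ A.powerset, φ B := by
    have hset : univ.filter (fun B : Finset α => B ⊂ A ∧ Even B.card)
        = A.powerset.filter (fun B => B ≠ A ∧ Even B.card) := by
      ext B
      simp only [mem_filter, mem_univ, true_and, mem_powerset,
        Finset.ssubset_iff_subset_ne, and_assoc]
    rw [hset]
    have hsummand : ∀ B ∈ A.powerset,
        (if (B ∩ C).Nonempty ∧ (B \ C).Nonempty then
          ((tangentNumber (a - B.card) : ℝ) / 2 ^ (a - B.card)) else 0) = φ B := by
      intro B hB
      have hBA : B ⊆ A := Finset.mem_powerset.mp hB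
      have h1 : B ∩ C = B ∩ T := by
        rw [hT_def, ← Finset.inter_assoc, Finset.inter_eq_left.mpr hBA]
      have h2 : B \ C = B \ T := by
        rw [hT_def]
        ext x
        simp only [Finset.mem_sdiff, Finset.mem_inter, not_and]
        constructor
        · rintro ⟨hx, hxc⟩; exact ⟨hx, fun _ hc => hxc hc⟩
        · rintro ⟨hx, hxc⟩; exact ⟨hx, fun hc => hxc (hBA hx) hc⟩
      have h3 : ((tangentNumber (a - B.card) : ℝ) / 2 ^ (a - B.card))
          = ((c (a - B.card) : ℚ) : ℝ) := by
        rw [c_eq_tangent]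
        push_cast
        ring
      simp only [hφ, h1, h2, h3]
    rw [Finset.sum_congr rfl (fun B hB => hsummand B (Finset.mem_filter.mp hB).1)]
    apply Finset.sum_filter_of_ne
    intro B hB hne
    have hBA : B ⊆ A := Finset.mem_powerset.mp hB
    have hcne : c (a - B.card) ≠ 0 := by
      intro h0
      apply hne
      simp [hφ, h0]
    have hodd : Odd (a - B.card) := by
      rcases Nat.even_or_odd (a - B.card) with he | ho
      · exact absurd (c_even he) hcne
      · exact ho
    have hblt : B.card < a := by
      have : a - B.card ≠ 0 := by
        rcases hodd with ⟨m, hm⟩; omega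
      have hle : B.card ≤ a := Finset.card_le_card hBA
      omega
    constructor
    · intro hBA'
      rw [hBA'] at hblt
      omega
    · have hsub : a - (a - B.card) = B.card := by omega
      have := Nat.Odd.sub_odd hA hodd
      rw [hsub] at this
      exact this
  rw [hstep1]
  -- Step 2: group by cardinality
  have hstep2 : ∑ B ∈ A.powerset, φ B
      = ∑ b ∈ range (a + 1), ∑ B ∈ A.powerset.filter (fun B => B.card = b), φ B := by
    symm
    apply Finset.sum_fiberwise_of_maps_to
    intro B hB
    rw [mem_range, Nat.lt_succ_iff]
    exact Finset.card_le_card (Finset.mem_powerset.mp hB)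
  rw [hstep2]
  -- Step 3: inner sums
  have hstep3 : ∀ b ∈ range (a + 1),
      ∑ B ∈ A.powerset.filter (fun B => B.card = b), φ B
      = (((if b = 0 then 0
          else c (a - b) * ((a.choose b : ℚ) - (t.choose b : ℚ) - ((a - t).choose b : ℚ))) : ℚ) : ℝ) := by
    intro b hb
    have hpc : A.powerset.filter (fun B => B.card = b) = powersetCard b A :=
      Finset.powersetCard_eq_filter.symm
    rw [hpc]
    rcases Nat.eq_zero_or_pos b with h0 | h0
    · subst h0
      rw [Finset.powersetCard_zero]
      simp [hφ]
    · rw [if_neg (by omega)]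
      have hval : ∀ B ∈ powersetCard b A, φ B
          = if (B ∩ T).Nonempty ∧ (B \ T).Nonempty then ((c (a - b) : ℚ) : ℝ) else 0 := by
        intro B hB
        rw [Finset.mem_powersetCard] at hB
        simp only [hφ, hB.2]
      rw [Finset.sum_congr rfl hval, ← Finset.sum_filter, Finset.sum_const, nsmul_eq_mul]
      have hcount := count_lemma A T hTA b (by omega)
      rw [hsdcard] at hcount
      have hcast : ((((powersetCard b A).filter
          (fun B => (B ∩ T).Nonempty ∧ (B \ T).Nonempty)).card : ℝ))
          = (a.choose b : ℝ) - (t.choose b : ℝ) - ((a - t).choose b : ℝ) := by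
        have := congrArg (fun n : ℕ => (n : ℝ)) hcount
        push_cast at this
        linarith [this]
      rw [hcast]
      push_cast
      ring
  rw [Finset.sum_congr rfl hstep3, ← Rat.cast_sum, bridge a t hA htle]
  -- Step 5 : identify the indicator
  have hiff1 : (A ∩ C).Nonempty ↔ 0 < t := by
    rw [← hT_def, ht_def, Finset.card_pos]
  have hiff2 : (A \ C).Nonempty ↔ t < a := by
    rw [hsd, ← Finset.card_pos, hsdcard]
    omega
  by_cases h : (A ∩ C).Nonempty ∧ (A \ C).Nonempty
  · rw [if_pos h, if_pos ⟨hiff1.mp h.1, hiff2.mp h.2⟩]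
    norm_num
  · rw [if_neg h, if_neg (by
      intro hc
      exact h ⟨hiff1.mpr hc.1, hiff2.mpr hc.2⟩)]
    norm_num
end DivAux

/-- For a symmetrized split weight function `w` with phylogenetic
diversity `δ A = ∑_{B : A ∩ B ≠ ∅, A ∖ B ≠ ∅} w B`: if `A` has odd cardinality then
`δ A = ∑_{B ⊊ A, |B| even} (𝕋_{|A|−|B|}/2^{|A|−|B|}) δ B`. -/
theorem diversity_odd_from_even
    {α : Type*} [Fintype α] [DecidableEq α]
    (w : Finset α → ℝ) (hw : ∀ B : Finset α, 0 ≤ w B)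
    (hwsym : ∀ B : Finset α, w B = w Bᶜ)
    (δ : Finset α → ℝ)
    (hδ : ∀ A : Finset α, δ A =
      ∑ B ∈ univ.filter (fun B : Finset α => (A ∩ B).Nonempty ∧ (A \ B).Nonempty), w B)
    (A : Finset α) (hA : Odd A.card) :
    δ A = ∑ B ∈ univ.filter (fun B : Finset α => B ⊂ A ∧ Even B.card),
      (tangentNumber (A.card - B.card) : ℝ) / 2 ^ (A.card - B.card) * δ B := by
  classical
  rw [hδ A]
  have hrw : ∀ B ∈ univ.filter (fun B : Finset α => B ⊂ A ∧ Even B.card),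
      (tangentNumber (A.card - B.card) : ℝ) / 2 ^ (A.card - B.card) * δ B
      = ∑ C ∈ univ, (if (B ∩ C).Nonempty ∧ (B \ C).Nonempty then
          ((tangentNumber (A.card - B.card) : ℝ) / 2 ^ (A.card - B.card)) * w C else 0) := by
    intro B _
    rw [hδ B, Finset.sum_filter, Finset.mul_sum]
    apply Finset.sum_congr rfl
    intro C _
    rw [mul_ite, mul_zero]
  rw [Finset.sum_congr rfl hrw, Finset.sum_comm, Finset.sum_filter]
  apply Finset.sum_congr rfl
  intro C _
  have hk := DivAux.key_real A C hA
  calc (if (A ∩ C).Nonempty ∧ (A \ C).Nonempty then w C else 0)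
      = (if (A ∩ C).Nonempty ∧ (A \ C).Nonempty then (1:ℝ) else 0) * w C := by
        rw [ite_mul, one_mul, zero_mul]
    _ = (∑ B ∈ univ.filter (fun B : Finset α => B ⊂ A ∧ Even B.card),
          (if (B ∩ C).Nonempty ∧ (B \ C).Nonempty then
            ((tangentNumber (A.card - B.card) : ℝ) / 2 ^ (A.card - B.card)) else 0)) * w C := by
        rw [hk]
    _ = ∑ B ∈ univ.filter (fun B : Finset α => B ⊂ A ∧ Even B.card),
          (if (B ∩ C).Nonempty ∧ (B \ C).Nonempty then
            ((tangentNumber (A.card - B.card) : ℝ) / 2 ^ (A.card - B.card)) * w C else 0) := by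
        rw [Finset.sum_mul]
        apply Finset.sum_congr rfl
        intro B _
        rw [ite_mul, zero_mul]
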